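/- For goods with n agents sharing identical valuations: allocating n/2 unit-value items (n even) requires total subsidy at least n/4 for any proportional-with-subsidy allocation, where the subsidy of agent i is max{1/2 − v(X_i), 0}. -/
import Mathlib


open Finset

/-- Goods lower bound: allocating `n/2` identical unit-value goods among `n`
agents (`n` even) with identical valuations, any proportional-with-subsidy
allocation needs total subsidy at least `n/4`, where agent `i`'s subsidy is
`max (1/2 - v(X_i)) 0` (the proportional share being `1/2`). -/
theorem prop_goods_lower_bound_even (n : ℕ) (hn : 2 ≤ n) (heven : Even n)
    (X : Fin (n / 2) → Fin n) :
    (n : ℝ) / 4 ≤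
      ∑ i : Fin n,
        max ((1 : ℝ) / 2 - ((Finset.univ.filter fun e => X e = i).card : ℝ)) 0 := by
  classical
  set S : Finset (Fin n) := Finset.univ \ Finset.image X Finset.univ with hS
  have hcardS : n / 2 ≤ S.card := by
    have h1 : (Finset.image X Finset.univ).card ≤ n / 2 := by
      calc (Finset.image X Finset.univ).card ≤ (Finset.univ : Finset (Fin (n/2))).card :=
            Finset.card_image_le
        _ = n / 2 := by simp
    have h2 : S.card = n - (Finset.image X Finset.univ).card := by
      rw [hS, Finset.card_sdiff_of_subset (Finset.subset_univ _)]
      simp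
    have h3 : n / 2 ≤ n - n / 2 := by omega
    omega
  have hstep : ∑ i ∈ S, ((1:ℝ)/2) ≤
      ∑ i : Fin n, max ((1 : ℝ) / 2 - ((Finset.univ.filter fun e => X e = i).card : ℝ)) 0 := by
    have heq : ∑ i ∈ S, ((1:ℝ)/2) =
        ∑ i ∈ S, max ((1 : ℝ) / 2 - ((Finset.univ.filter fun e => X e = i).card : ℝ)) 0 := by
      apply Finset.sum_congr rfl
      intro i hi
      have : (Finset.univ.filter fun e => X e = i) = ∅ := by
        apply Finset.filter_eq_empty_iff.mpr
        intro e _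
        simp only [hS, Finset.mem_sdiff, Finset.mem_image] at hi
        intro h; exact hi.2 ⟨e, Finset.mem_univ e, h⟩
      rw [this]
      simp
    rw [heq]
    exact Finset.sum_le_sum_of_subset_of_nonneg (Finset.subset_univ _)
      (fun i _ _ => le_max_right _ _)
  refine le_trans ?_ hstep
  rw [Finset.sum_const, nsmul_eq_mul]
  have h4 : ((n/2 : ℕ) : ℝ) ≤ (S.card : ℝ) := by exact_mod_cast hcardS
  have h5 : (n : ℝ) = 2 * ((n/2 : ℕ) : ℝ) := by
    have : 2 * (n / 2) = n := by
      obtain ⟨k, hk⟩ := heven; omega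
    exact_mod_cast this.symm
  rw [h5]
  nlinarith
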